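/- Let {F_n}_{n \geq 1} be a sequence of linear maps on an algebra A over a field of characteristic zero, where each F_n is a {G_n,H_n}-derivation. Define sequences f_n, g_n, h_n by f_0 = g_0 = h_0 = I and the recursions (n+1) f_{n+1} = \sum_{k=0}^{n} F_{k+1} \circ f_{n-k}, (n+1) g_{n+1} = \sum_{k=0}^{n} G_{k+1} \circ g_{n-k}, (n+1) h_{n+1} = \sum_{k=0}^{n} H_{k+1} \circ h_{n-k}. Then {f_n} is a higher {g_n,h_n}-derivation, i.e., f_n(ab) = \sum_{k=0}^{n} g_k(a) h_{n-k}(b) = \sum_{k=0}^{n} h_k(a) g_{n-k}(b) for all a, b \in A and all n. -/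

import Mathlib

open Finset

private lemma triangle_swap {M : Type*} [AddCommMonoid M] (n : ℕ) (t : ℕ → ℕ → M) :
    ∑ k ∈ range (n + 1), ∑ j ∈ range (n - k + 1), t k j
      = ∑ j ∈ range (n + 1), ∑ k ∈ range (n - j + 1), t k j := by
  refine Finset.sum_comm' ?_
  intro k j
  simp only [mem_range]
  omega

private lemma key_half {K A : Type*} [Field K] [CharZero K] [Ring A] [Algebra K A]
    (F G H : ℕ → Module.End K A)
    (hFGH : ∀ n, 1 ≤ n → ∀ a b : A, F n (a * b) = G n a * b + a * H n b)
    (f g h : ℕ → Module.End K A)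
    (hf0 : f 0 = 1) (hg0 : g 0 = 1) (hh0 : h 0 = 1)
    (hfrec : ∀ n : ℕ, ((n : K) + 1) • f (n + 1) = ∑ k ∈ Finset.range (n + 1), F (k + 1) * f (n - k))
    (hgrec : ∀ n : ℕ, ((n : K) + 1) • g (n + 1) = ∑ k ∈ Finset.range (n + 1), G (k + 1) * g (n - k))
    (hhrec : ∀ n : ℕ, ((n : K) + 1) • h (n + 1) = ∑ k ∈ Finset.range (n + 1), H (k + 1) * h (n - k)) :
    ∀ (n : ℕ) (a b : A),
      f n (a * b) = ∑ k ∈ Finset.range (n + 1), g k a * h (n - k) b := by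
  intro n
  induction n using Nat.strong_induction_on with
  | _ n ih =>
    match n with
    | 0 => intro a b; simp [hf0, hg0, hh0]
    | n + 1 =>
      intro a b
      -- apply the recursion to a*b
      have h1 : ((n : K) + 1) • f (n + 1) (a * b)
          = ∑ k ∈ range (n + 1), F (k + 1) (f (n - k) (a * b)) := by
        have := LinearMap.congr_fun (hfrec n) (a * b)
        simpa [Module.End.mul_apply] using this
      -- expand each f (n-k) (a*b) via the IH and the derivation property
      have h2 : ((n : K) + 1) • f (n + 1) (a * b)
          = (∑ k ∈ range (n + 1), ∑ j ∈ range (n - k + 1),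
              G (k + 1) (g j a) * h (n - k - j) b)
            + ∑ k ∈ range (n + 1), ∑ j ∈ range (n - k + 1),
              g j a * H (k + 1) (h (n - k - j) b) := by
        rw [h1, ← Finset.sum_add_distrib]
        refine Finset.sum_congr rfl fun k hk => ?_
        rw [ih (n - k) (by simp at hk; omega) a b, map_sum, ← Finset.sum_add_distrib]
        refine Finset.sum_congr rfl fun j hj => ?_
        exact hFGH (k + 1) (by omega) _ _
      -- first double sum
      have S1 : (∑ k ∈ range (n + 1), ∑ j ∈ range (n - k + 1),
              G (k + 1) (g j a) * h (n - k - j) b)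
          = ∑ j ∈ range (n + 1), ((j : K) + 1) • (g (j + 1) a * h (n - j) b) := by
        have r1 : ∀ k ∈ range (n + 1),
            (∑ j ∈ range (n - k + 1), G (k + 1) (g j a) * h (n - k - j) b)
              = ∑ j ∈ range (n - k + 1), G (k + 1) (g (n - k - j) a) * h j b := by
          intro k hk
          have := Finset.sum_range_reflect
            (fun j => G (k + 1) (g (n - k - j) a) * h j b) (n - k + 1)
          rw [← this]
          refine Finset.sum_congr rfl fun j hj => ?_
          simp only [mem_range] at hj hk
          have e1 : n - k + 1 - 1 - j = n - k - j := by omega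
          have e2 : n - k - (n - k - j) = j := by omega
          rw [e1, e2]
        rw [Finset.sum_congr rfl r1, triangle_swap]
        have r2 : ∀ j ∈ range (n + 1),
            (∑ k ∈ range (n - j + 1), G (k + 1) (g (n - k - j) a) * h j b)
              = (((n - j : ℕ) : K) + 1) • (g (n - j + 1) a * h j b) := by
          intro j hj
          rw [← Finset.sum_mul]
          have := LinearMap.congr_fun (hgrec (n - j)) a
          simp only [LinearMap.smul_apply, LinearMap.sum_apply, Module.End.mul_apply] at this
          rw [← smul_mul_assoc, this]
          refine congrArg (· * h j b) (Finset.sum_congr rfl fun k hk => ?_)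
          simp only [mem_range] at hj hk
          have e1 : n - k - j = n - j - k := by omega
          rw [e1]
        rw [Finset.sum_congr rfl r2]
        -- reflect in j
        have := Finset.sum_range_reflect
          (fun j => (((n - j : ℕ) : K) + 1) • (g (n - j + 1) a * h j b)) (n + 1)
        rw [this.symm]
        refine Finset.sum_congr rfl fun j hj => ?_
        simp only [mem_range] at hj
        have e1 : n - (n - j) = j := by omega
        rw [Nat.add_sub_cancel, e1]
      -- second double sum
      have S2 : (∑ k ∈ range (n + 1), ∑ j ∈ range (n - k + 1),
              g j a * H (k + 1) (h (n - k - j) b))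
          = ∑ j ∈ range (n + 1), (((n - j : ℕ) : K) + 1) • (g j a * h (n - j + 1) b) := by
        rw [triangle_swap]
        refine Finset.sum_congr rfl fun j hj => ?_
        rw [← Finset.mul_sum]
        have := LinearMap.congr_fun (hhrec (n - j)) b
        simp only [LinearMap.smul_apply, LinearMap.sum_apply, Module.End.mul_apply] at this
        rw [← mul_smul_comm, this]
        refine congrArg (g j a * ·) (Finset.sum_congr rfl fun k hk => ?_)
        simp only [mem_range] at hj hk
        have e1 : n - k - j = n - j - k := by omega
        rw [e1]
      -- combine
      set v : ℕ → A := fun i => g i a * h (n + 1 - i) b with hv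
      have S1' : (∑ j ∈ range (n + 1), ((j : K) + 1) • (g (j + 1) a * h (n - j) b))
          = ∑ i ∈ range (n + 2), (i : K) • v i := by
        rw [Finset.sum_range_succ' (fun i => (i : K) • v i) (n + 1)]
        simp only [Nat.cast_zero, zero_smul, add_zero]
        refine Finset.sum_congr rfl fun j hj => ?_
        simp only [mem_range] at hj
        have : n + 1 - (j + 1) = n - j := by omega
        simp [hv, this]
      have S2' : (∑ j ∈ range (n + 1), (((n - j : ℕ) : K) + 1) • (g j a * h (n - j + 1) b))
          = ∑ i ∈ range (n + 2), ((n + 1 - i : ℕ) : K) • v i := by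
        rw [Finset.sum_range_succ (fun i => ((n + 1 - i : ℕ) : K) • v i) (n + 1)]
        simp only [Nat.sub_self, Nat.cast_zero, zero_smul, add_zero]
        refine Finset.sum_congr rfl fun j hj => ?_
        simp only [mem_range] at hj
        have e1 : (n + 1 - j : ℕ) = (n - j) + 1 := by omega
        have e2 : n - j + 1 = n + 1 - j := by omega
        rw [e1, hv]
        push_cast
        rw [e2]
      have hmain : ((n : K) + 1) • f (n + 1) (a * b)
          = ((n : K) + 1) • ∑ i ∈ range (n + 2), v i := by
        rw [h2, S1, S2, S1', S2', ← Finset.sum_add_distrib, Finset.smul_sum]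
        refine Finset.sum_congr rfl fun i hi => ?_
        simp only [mem_range] at hi
        rw [← add_smul]
        congr 1
        rw [Nat.cast_sub (by omega)]
        push_cast
        ring
      have hne : ((n : K) + 1) ≠ 0 := Nat.cast_add_one_ne_zero n
      exact smul_right_injective A hne hmain


/-- If sequences `fₙ, gₙ, hₙ` are defined from a sequence of `{Gₙ,Hₙ}`-derivations `Fₙ` via
the recursions `(n+1) fₙ₊₁ = ∑ₖ Fₖ₊₁ ∘ fₙ₋ₖ` (etc.), then `{fₙ}` is a higher
`{gₙ,hₙ}`-derivation. -/
theorem recursion_gives_higher_gh_derivation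
    {K A : Type*} [Field K] [CharZero K] [Ring A] [Algebra K A]
    (F G H : ℕ → Module.End K A)
    (hFGH : ∀ n, 1 ≤ n → ∀ a b : A,
      F n (a * b) = G n a * b + a * H n b ∧ F n (a * b) = H n a * b + a * G n b)
    (f g h : ℕ → Module.End K A)
    (hf0 : f 0 = 1) (hg0 : g 0 = 1) (hh0 : h 0 = 1)
    (hfrec : ∀ n : ℕ, ((n : K) + 1) • f (n + 1) = ∑ k ∈ Finset.range (n + 1), F (k + 1) * f (n - k))
    (hgrec : ∀ n : ℕ, ((n : K) + 1) • g (n + 1) = ∑ k ∈ Finset.range (n + 1), G (k + 1) * g (n - k))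
    (hhrec : ∀ n : ℕ, ((n : K) + 1) • h (n + 1) = ∑ k ∈ Finset.range (n + 1), H (k + 1) * h (n - k)) :
    ∀ (n : ℕ) (a b : A),
      f n (a * b) = ∑ k ∈ Finset.range (n + 1), g k a * h (n - k) b ∧
      f n (a * b) = ∑ k ∈ Finset.range (n + 1), h k a * g (n - k) b := by
  intro n a b
  exact ⟨key_half F G H (fun n hn a b => (hFGH n hn a b).1) f g h hf0 hg0 hh0
      hfrec hgrec hhrec n a b,
    key_half F H G (fun n hn a b => (hFGH n hn a b).2) f h g hf0 hh0 hg0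
      hfrec hhrec hgrec n a b⟩
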